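/- The set of real numbers of the form log q / log p, where p and q range over all prime numbers, is dense in the interval (0,∞). -/
import Mathlib


open Real

/-- The golden ratio `(1 + √5)/2`. -/
noncomputable def phiR : ℝ := (1 + Real.sqrt 5) / 2

/-- `mmax p q n = max(h_n·log p, h_{n-1}·log q)`, the logarithmic Mahler measure
of `p^{h_n}/q^{h_{n-1}}` for distinct primes `p`, `q`, where `h` is Fibonacci. -/
noncomputable def mmax (p q n : ℕ) : ℝ :=
  max ((Nat.fib n : ℝ) * Real.log p) ((Nat.fib (n - 1) : ℝ) * Real.log q)

/-- `gmax n = max(h_n, φ·h_{n-1})`. -/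
noncomputable def gmax (n : ℕ) : ℝ :=
  max (Nat.fib n : ℝ) (phiR * (Nat.fib (n - 1) : ℝ))

/-- The equation defining `t_n(p,q)`:
`m(p^{h_n}/q^{h_{n-1}})^t = m(p^{h_{n-1}}/q^{h_{n-2}})^t + m(p^{h_{n-2}}/q^{h_{n-3}})^t`. -/
def peq (p q n : ℕ) (t : ℝ) : Prop :=
  mmax p q n ^ t = mmax p q (n - 1) ^ t + mmax p q (n - 2) ^ t

/-- The equation defining `s_n`:
`max(h_n, φ h_{n-1})^t = max(h_{n-1}, φ h_{n-2})^t + max(h_{n-2}, φ h_{n-3})^t`. -/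
def geq (n : ℕ) (t : ℝ) : Prop :=
  gmax n ^ t = gmax (n - 1) ^ t + gmax (n - 2) ^ t

/-- Condition (W) on a pair of primes `(p,q)` relative to `N`. -/
def CondW (N p q : ℕ) : Prop :=
  ((Nat.fib N : ℝ) / Nat.fib (N - 1) < Real.log q / Real.log p ∧
    Real.log q / Real.log p < (Nat.fib (N - 1) : ℝ) / Nat.fib (N - 2)) ∨
  ((Nat.fib (N - 1) : ℝ) / Nat.fib (N - 2) < Real.log q / Real.log p ∧
    Real.log q / Real.log p < (Nat.fib N : ℝ) / Nat.fib (N - 1))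

/-- `V_n`: vectors `x ∈ ℕ^N` (1-based entry `i` is `x ⟨i-1⟩`) with
`Σ x_i h_i = h_n` and `Σ x_i h_{i-1} = h_{n-1}`. -/
def Vset (N n : ℕ) : Set (Fin N → ℕ) :=
  {x | ∑ i, x i * Nat.fib ((i : ℕ) + 1) = Nat.fib n ∧
       ∑ i, x i * Nat.fib (i : ℕ) = Nat.fib (n - 1)}

/-- The measure function `f_x(t) = (Σ_{i=1}^N x_i·max(h_i log p, h_{i-1} log q)^t)^{1/t}`. -/
noncomputable def fmeas (N p q : ℕ) (x : Fin N → ℕ) (t : ℝ) : ℝ :=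
  (∑ i, (x i : ℝ) * mmax p q ((i : ℕ) + 1) ^ t) ^ (1 / t)

/-- `x_n(i)`: the vector whose (i−2)nd (1-based) entry is `h_{n+1−i}`, whose
(i−1)st entry is `h_{n+2−i}`, and whose other entries are 0.  (For `i = 2`, `n = 1`
this gives `x_1(2) = (1,0,…,0)`.) -/
def xvec (N n i : ℕ) : Fin N → ℕ := fun j =>
  if (j : ℕ) + 3 = i then Nat.fib (n + 1 - i)
  else if (j : ℕ) + 2 = i then Nat.fib (n + 2 - i)
  else 0

/-- `S_n = {x_n(i) : 3 ≤ i ≤ n+1}` for `n ≥ 2`, and `S_1 = {x_1(2)}`. -/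
def Sset (N n : ℕ) : Set (Fin N → ℕ) :=
  if n = 1 then {xvec N 1 2}
  else {x | ∃ i, 3 ≤ i ∧ i ≤ n + 1 ∧ x = xvec N n i}

/-- `z` is almost consecutive-free: `z_j·z_{j+1} ≠ 0` implies `z_i = 0` for all `i > j+1`. -/
def ACF (N : ℕ) (z : Fin N → ℕ) : Prop :=
  ∀ (j : Fin N) (hj : (j : ℕ) + 1 < N),
    z j * z ⟨(j : ℕ) + 1, hj⟩ ≠ 0 → ∀ i : Fin N, (j : ℕ) + 1 < (i : ℕ) → z i = 0

/-- `C_n`: the almost consecutive-free elements of `V_n`. -/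
def Cset (N n : ℕ) : Set (Fin N → ℕ) := {z ∈ Vset N n | ACF N z}

/-- A factorization of `z ∈ V_n`: a `K`-tuple `x` with `x k ∈ V_{idx k}`,
`1 ≤ idx k ≤ n`, and `z = Σ_k x k`. -/
def IsFactorization (N n : ℕ) (z : Fin N → ℕ) {K : ℕ}
    (idx : Fin K → ℕ) (x : Fin K → Fin N → ℕ) : Prop :=
  (∀ k, 1 ≤ idx k ∧ idx k ≤ n ∧ x k ∈ Vset N (idx k)) ∧ z = ∑ k, x k

/-- A tuple is `S`-type if each component lies in `∪_{i=1}^n S_i`. -/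
def STypeFac (N n : ℕ) {K : ℕ} (x : Fin K → Fin N → ℕ) : Prop :=
  ∀ k, ∃ i, 1 ≤ i ∧ i ≤ n ∧ x k ∈ Sset N i

/-- `z` is `S`-restricted: every non-trivial (i.e. `K ≠ 1`) factorization is `S`-type. -/
def SRestricted (N n : ℕ) (z : Fin N → ℕ) : Prop :=
  ∀ (K : ℕ) (idx : Fin K → ℕ) (x : Fin K → Fin N → ℕ),
    IsFactorization N n z idx x → K ≠ 1 → STypeFac N n x

/-- `R_n`: the `S`-restricted elements of `C_n`. -/
def Rset (N n : ℕ) : Set (Fin N → ℕ) := {z ∈ Cset N n | SRestricted N n z}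

/-- The infimum attaining set `U_x = {t > 0 : f_x(t) = min{f_y(t) : y ∈ V_j}}`. -/
def Uset (N p q j : ℕ) (x : Fin N → ℕ) : Set ℝ :=
  {t | 0 < t ∧ IsLeast ((fun y => fmeas N p q y t) '' Vset N j) (fmeas N p q x t)}

/-- The shift map `λ((x_1,…,x_N)) = (0,x_1,…,x_{N-1})`. -/
def shiftMap (N : ℕ) (x : Fin N → ℕ) : Fin N → ℕ := fun j =>
  if (j : ℕ) = 0 then 0
  else x ⟨(j : ℕ) - 1, lt_of_le_of_lt (Nat.sub_le _ _) j.isLt⟩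

/-- the set of numbers `log q / log p`, with `p` and `q` prime, is dense in
`(0,∞)`. -/
theorem stmt18 :
    ∀ x : ℝ, 0 < x → ∀ ε : ℝ, 0 < ε →
      ∃ p q : ℕ, p.Prime ∧ q.Prime ∧ |Real.log q / Real.log p - x| < ε := by
  intro x hx ε hε
  obtain ⟨p, hpge, hp⟩ := Nat.exists_infinite_primes (⌈(4:ℝ) ^ (1/ε)⌉₊ + 1)
  have hp1 : (1:ℝ) < p := by exact_mod_cast hp.one_lt
  have hpR : (4:ℝ) ^ (1/ε) < p := by
    calc (4:ℝ) ^ (1/ε) ≤ (⌈(4:ℝ) ^ (1/ε)⌉₊ : ℝ) := Nat.le_ceil _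
      _ < p := by exact_mod_cast Nat.lt_of_lt_of_le (Nat.lt_succ_self _) hpge
  have hlogp : 0 < Real.log p := Real.log_pos hp1
  set y : ℝ := (p:ℝ) ^ x with hy
  have hy1 : 1 < y := Real.one_lt_rpow_iff_of_pos (by positivity) |>.2 (Or.inl ⟨hp1, hx⟩)
  have hn0 : ⌈y⌉₊ ≠ 0 := by
    have : (0:ℝ) < y := by linarith
    simpa using Nat.ceil_pos.2 this |>.ne'
  obtain ⟨q, hq, hq1, hq2⟩ := Nat.exists_prime_lt_and_le_two_mul ⌈y⌉₊ hn0
  refine ⟨p, q, hp, hq, ?_⟩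
  have hylog : Real.log y = x * Real.log p := Real.log_rpow (by positivity) x
  have hqy : y < (q:ℝ) := lt_of_le_of_lt (Nat.le_ceil y) (by exact_mod_cast hq1)
  have hq4y : (q:ℝ) ≤ 4 * y := by
    have hceil : (⌈y⌉₊ : ℝ) < y + 1 := Nat.ceil_lt_add_one (by linarith)
    have : (q:ℝ) ≤ 2 * (⌈y⌉₊ : ℝ) := by exact_mod_cast hq2
    linarith
  have hlow : x * Real.log p < Real.log q := by
    rw [← hylog]; exact Real.log_lt_log (by linarith) hqy
  have hhigh : Real.log q ≤ Real.log 4 + x * Real.log p := by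
    calc Real.log q ≤ Real.log (4 * y) := Real.log_le_log (by linarith) hq4y
      _ = Real.log 4 + x * Real.log p := by
        rw [Real.log_mul (by norm_num) (by linarith), hylog]
  have heps : Real.log 4 / Real.log p < ε := by
    have h4 : Real.log ((4:ℝ) ^ (1/ε)) < Real.log p :=
      Real.log_lt_log (by positivity) hpR
    rw [Real.log_rpow (by norm_num)] at h4
    rw [div_lt_iff₀ hlogp]
    have := (div_lt_iff₀ hε).1 (by rw [div_eq_inv_mul]; simpa [one_div] using h4)
    nlinarith [Real.log_pos (by norm_num : (1:ℝ) < 4), hε, hlogp, h4]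
  rw [abs_lt]
  constructor
  · have : x < Real.log q / Real.log p := by
      rw [lt_div_iff₀ hlogp]; linarith
    linarith
  · have : Real.log q / Real.log p ≤ x + Real.log 4 / Real.log p := by
      rw [div_le_iff₀ hlogp]
      have : (x + Real.log 4 / Real.log p) * Real.log p = x * Real.log p + Real.log 4 := by
        field_simp
      linarith [this]
    linarith
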